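/- Let v = (v_1,…,v_{n−1}) and w = (w_1,…,w_{m−1}) be two lists of nonnegative integers. Then (Σ_{β ⊨ n} q^{v(set(β))} r_β) · (Σ_{γ ⊨ m} q^{w(set(γ))} r_γ) = Σ_{α ⊨ n+m} q^{(v,0,w)(set(α))} r_α, where (v,0,w) denotes the list of length n+m−1 obtained by concatenating v, a single 0, and w. -/

import Mathlib

open scoped Classical

noncomputable section

/-- The monomial `x_{κ(1)} ⋯ x_{κ(n)}` recording the colors of vertices `1, …, n`,
as an exponent vector. -/
def colMono (n : ℕ) (κ : ℕ → ℕ) : ℕ →₀ ℕ :=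
  ∑ v ∈ Finset.Icc 1 n, Finsupp.single (κ v) 1

/-- A coloring `κ : [n] → ℕ`, normalized to be `0` outside of `[n] = {1, …, n}`. -/
def Supported (n : ℕ) (κ : ℕ → ℕ) : Prop :=
  ∀ v, v < 1 ∨ n < v → κ v = 0

/-- The number of ascents of a coloring `κ`: edges `(i,j) ∈ E` with `i < j` and `κ i < κ j`. -/
def asc (E : Finset (ℕ × ℕ)) (κ : ℕ → ℕ) : ℕ :=
  (E.filter fun e => e.1 < e.2 ∧ κ e.1 < κ e.2).card

/-- The unicellular LLT polynomial of a graph with vertex set `[n]` and edge set `E`: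
`LLT = Σ_κ q^{asc κ} x_{κ(1)} ⋯ x_{κ(n)}`, a power series in `x_0, x_1, x_2, …` with
coefficients in `ℤ[q]` (where `q = Polynomial.X`). -/
def LLT (n : ℕ) (E : Finset (ℕ × ℕ)) : MvPowerSeries ℕ (Polynomial ℤ) :=
  fun d => ∑ᶠ κ : ℕ → ℕ,
    if Supported n κ ∧ colMono n κ = d then (Polynomial.X : Polynomial ℤ) ^ asc E κ else 0

/-- `set(α) = {α₁, α₁+α₂, …, α₁+⋯+α_{ℓ-1}} ⊆ [n-1]` for a composition `α ⊨ n`. -/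
def compSet {n : ℕ} (c : Composition n) : Finset ℕ :=
  (Finset.Ico 1 c.length).image c.sizeUpTo

/-- The condition on a coloring `κ : [n] → ℕ` in the definition of the ribbon Schur
function `r_α`: `κ(i) < κ(i+1)` if `i ∈ set(α)` and `κ(i) ≥ κ(i+1)` otherwise. -/
def RibbonCond (n : ℕ) {N : ℕ} (c : Composition N) (κ : ℕ → ℕ) : Prop :=
  ∀ i, 1 ≤ i → i ≤ n - 1 →
    (i ∈ compSet c → κ i < κ (i + 1)) ∧ (i ∉ compSet c → κ (i + 1) ≤ κ i)

/-- The ribbon Schur function `r_α` of a composition `α ⊨ n`, as a power series in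
`x_0, x_1, x_2, …` with coefficients in `ℤ[q]`. -/
def ribbon {n : ℕ} (c : Composition n) : MvPowerSeries ℕ (Polynomial ℤ) :=
  fun d => ∑ᶠ κ : ℕ → ℕ,
    if Supported n κ ∧ colMono n κ = d ∧ RibbonCond n c κ then 1 else 0

/-- `v(S) = Σ_{s ∈ S} v_s`. -/
def wt (v : ℕ → ℕ) (S : Finset ℕ) : ℕ := ∑ s ∈ S, v s

/-- `Σ_{α ⊨ n} q^{v(set(α))} r_α`. -/
def qRibbonSum (n : ℕ) (v : ℕ → ℕ) : MvPowerSeries ℕ (Polynomial ℤ) :=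
  ∑ α : Composition n, (Polynomial.X : Polynomial ℤ) ^ wt v (compSet α) • ribbon α

/-- Edge set of the path `P_n`: edges `(i, i+1)` for `1 ≤ i ≤ n-1`. -/
def pathEdges (n : ℕ) : Finset (ℕ × ℕ) :=
  (Finset.Icc 1 (n - 1)).image fun i => (i, i + 1)

/-- Edge set of the complete graph `K_m`: edges `(i, j)` for `1 ≤ i < j ≤ m`. -/
def completeEdges (m : ℕ) : Finset (ℕ × ℕ) :=
  ((Finset.Icc 1 m) ×ˢ (Finset.Icc 1 m)).filter fun e => e.1 < e.2

/-- Edge set of the melting complete graph `K_m^{(k)}`: `K_m` with the `k` edges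
`(1,m), (1,m-1), …, (1,m-k+1)` removed. -/
def meltingCompleteEdges (m k : ℕ) : Finset (ℕ × ℕ) :=
  completeEdges m \ ((Finset.Icc (m - k + 1) m).image fun j => (1, j))

/-- Edge set of the concatenation `G + H`, where `G` has `n` vertices:
`E(G) ∪ {(i+n-1, j+n-1) : (i,j) ∈ E(H)}`. -/
def concatEdges (n : ℕ) (EG EH : Finset (ℕ × ℕ)) : Finset (ℕ × ℕ) :=
  EG ∪ EH.image fun e => (e.1 + n - 1, e.2 + n - 1)

/-- Edge set of the melting lollipop graph `L_{m,n}^{(k)} = P_{n+1} + K_m^{(k)}`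
on `n + m` vertices. -/
def lollipopEdges (m n k : ℕ) : Finset (ℕ × ℕ) :=
  concatEdges (n + 1) (pathEdges (n + 1)) (meltingCompleteEdges m k)

/-- The area sequence of the graph with edge set `E`:
`a_i = max({0} ∪ {j - i : (i,j) ∈ E})`. -/
def areaSeq (E : Finset (ℕ × ℕ)) (i : ℕ) : ℕ :=
  (E.filter fun e => e.1 = i).sup fun e => e.2 - e.1

/-- Edge set of the reverse `Gʳ` of a graph `G` on `n` vertices:
`{(n+1-j, n+1-i) : (i,j) ∈ E(G)}`. -/
def reverseEdges (n : ℕ) (E : Finset (ℕ × ℕ)) : Finset (ℕ × ℕ) :=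
  E.image fun e => (n + 1 - e.2, n + 1 - e.1)

/-- Edge set of the two-headed melting lollipop graph
`⁽ᵏ¹⁾ₘ₁L_{m₂,n}^{(k₂)} = (K_{m₁}^{(k₁)})ʳ + P_{n+2} + K_{m₂}^{(k₂)}`,
where `np1 = n + 1` (so that `n ≥ -1` is allowed). It has `m₁ + n + m₂` vertices. -/
def twoHeadedEdges (m1 k1 np1 m2 k2 : ℕ) : Finset (ℕ × ℕ) :=
  concatEdges (m1 + np1)
    (concatEdges m1 (reverseEdges m1 (meltingCompleteEdges m1 k1)) (pathEdges (np1 + 1)))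
    (meltingCompleteEdges m2 k2)

/-- `E` is the edge set of a unit interval graph on vertex set `[N] = {1, …, N}`:
edges `(i,j)` satisfy `1 ≤ i < j ≤ N`, and if `(i,j) ∈ E` and `i ≤ k < l ≤ j`
then `(k,l) ∈ E`. -/
def IsUnitInterval (N : ℕ) (E : Finset (ℕ × ℕ)) : Prop :=
  (∀ e ∈ E, 1 ≤ e.1 ∧ e.1 < e.2 ∧ e.2 ≤ N) ∧
  ∀ i j k l : ℕ, (i, j) ∈ E → i ≤ k → k < l → l ≤ j → (k, l) ∈ E

/-- `a` is the area sequence of some unit interval graph on `N` vertices. -/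
def IsAreaSeq (N : ℕ) (a : ℕ → ℕ) : Prop :=
  ∃ E : Finset (ℕ × ℕ), IsUnitInterval N E ∧ ∀ i, a i = areaSeq E i

/-- The unit interval graph determined by an area sequence `a` on `N` vertices:
edges `(i, j)` with `i < j ≤ i + a_i`. -/
def graphOfArea (N : ℕ) (a : ℕ → ℕ) : Finset (ℕ × ℕ) :=
  ((Finset.Icc 1 N) ×ˢ (Finset.Icc 1 N)).filter fun e => e.1 < e.2 ∧ e.2 ≤ e.1 + a e.1

/-- The unicellular LLT polynomial of an area sequence `a` on `N` vertices. -/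
def LLTarea (N : ℕ) (a : ℕ → ℕ) : MvPowerSeries ℕ (Polynomial ℤ) :=
  LLT N (graphOfArea N a)

/-- A standard Young tableau of shape `μ`: a filling of the cells of `μ` with
`1, …, |μ|` each occurring exactly once, strictly increasing along rows and columns
(and `0` outside `μ`). -/
structure StandardYT (μ : YoungDiagram) where
  entry : ℕ × ℕ → ℕ
  bijOn : Set.BijOn entry ↑μ.cells (Set.Icc 1 μ.card)
  zeros : ∀ c ∉ μ.cells, entry c = 0
  row_lt : ∀ i j1 j2 : ℕ, j1 < j2 → (i, j2) ∈ μ → entry (i, j1) < entry (i, j2)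
  col_lt : ∀ i1 i2 j : ℕ, i1 < i2 → (i2, j) ∈ μ → entry (i1, j) < entry (i2, j)

/-- The descent set `D(T) ⊆ [N-1]` of a standard Young tableau `T`: those `k` such that
`k + 1` lies in a strictly later row than `k`. -/
def descents {μ : YoungDiagram} (T : StandardYT μ) : Finset ℕ :=
  (Finset.Icc 1 (μ.card - 1)).filter fun k =>
    ∃ c1 ∈ μ.cells, ∃ c2 ∈ μ.cells,
      T.entry c1 = k ∧ T.entry c2 = k + 1 ∧ c1.1 < c2.1

/-- The weight (exponent vector) `x^T` of a semistandard Young tableau. -/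
def ssytWeight {μ : YoungDiagram} (T : SemistandardYoungTableau μ) : ℕ →₀ ℕ :=
  ∑ c ∈ μ.cells, Finsupp.single (T c.1 c.2) 1

/-- The Schur function `s_μ = Σ_T x^T`, the sum over all semistandard Young tableaux
of shape `μ`, as a power series in `x_0, x_1, x_2, …` with coefficients in `ℤ[q]`. -/
def schur (μ : YoungDiagram) : MvPowerSeries ℕ (Polynomial ℤ) :=
  fun d => ∑ᶠ T : SemistandardYoungTableau μ, if ssytWeight T = d then 1 else 0

/-- `Σ_{λ ⊢ N} Σ_{T ∈ SYT(λ)} q^{b(D(T))} s_λ`, where partitions `λ ⊢ N` are identified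
with Young diagrams with `N` cells. -/
def descentSchurSum (N : ℕ) (b : ℕ → ℕ) : MvPowerSeries ℕ (Polynomial ℤ) :=
  ∑ᶠ (μ : YoungDiagram) (_ : μ.card = N) (T : StandardYT μ),
    (Polynomial.X : Polynomial ℤ) ^ wt b (descents T) • schur μ

lemma compSet_subset {n : ℕ} (c : Composition n) : compSet c ⊆ Finset.Icc 1 (n-1) := by
  intro k hk
  simp only [compSet, Finset.mem_image, Finset.mem_Ico] at hk
  obtain ⟨i, ⟨hi1, hi2⟩, rfl⟩ := hk
  have h1 : 1 ≤ c.sizeUpTo i := by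
    calc 1 ≤ c.sizeUpTo 1 := by
            rw [c.sizeUpTo_succ (lt_of_lt_of_le zero_lt_one (le_of_lt (lt_of_le_of_lt hi1 hi2) |>.trans (le_refl _)))]
            · simp [c.sizeUpTo_zero]
    _ ≤ c.sizeUpTo i := c.monotone_sizeUpTo hi1
  have h2 : c.sizeUpTo i < n := by
    have := c.sizeUpTo_strict_mono hi2
    calc c.sizeUpTo i < c.sizeUpTo (i+1) := this
      _ ≤ n := c.sizeUpTo_le _
  simp only [Finset.mem_Icc]
  omega

/-- membership of interior points in boundaries -/
lemma mem_boundaries_iff {n : ℕ} (c : Composition n) (k : ℕ) (h1 : 1 ≤ k) (h2 : k ≤ n - 1)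
    (hn : 1 ≤ n) (hk : k < n + 1) :
    (⟨k, hk⟩ : Fin (n+1)) ∈ c.boundaries ↔ k ∈ compSet c := by
  simp only [Composition.boundaries, Finset.mem_map, Finset.mem_univ, true_and,
    compSet, Finset.mem_image, Finset.mem_Ico]
  constructor
  · rintro ⟨i, hi⟩
    have hi' : c.sizeUpTo (i : ℕ) = k := by
      have := congrArg Fin.val hi
      simpa [Composition.boundary] using this
    refine ⟨i, ⟨?_, ?_⟩, hi'⟩
    · by_contra h
      push_neg at h
      interval_cases (i : ℕ)
      simp [c.sizeUpTo_zero] at hi'; omega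
    · rcases lt_or_eq_of_le (Nat.lt_succ_iff.mp i.2) with h | h
      · exact h
      · exfalso
        rw [h, c.sizeUpTo_length] at hi'
        omega
  · rintro ⟨i, ⟨hi1, hi2⟩, rfl⟩
    refine ⟨⟨i, Nat.lt_succ_of_lt hi2⟩, ?_⟩
    simp [Composition.boundary, Fin.ext_iff]

def compEquiv (n : ℕ) : Composition n ≃ Finset (Fin (n-1)) :=
  (compositionEquiv n).trans (compositionAsSetEquiv n)

lemma mem_compEquiv {n : ℕ} (hn : 1 ≤ n) (c : Composition n) (i : Fin (n-1)) :
    i ∈ compEquiv n c ↔ (i : ℕ) + 1 ∈ compSet c := by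
  have hk : (i : ℕ) + 1 < n + 1 := by have := i.2; omega
  have : (compEquiv n c : Finset (Fin (n-1))) = (compositionAsSetEquiv n) (c.toCompositionAsSet) := rfl
  rw [this]
  simp only [compositionAsSetEquiv, Equiv.coe_fn_mk, Set.mem_toFinset, Set.mem_setOf_eq]
  have hb : c.toCompositionAsSet.boundaries = c.boundaries := rfl
  rw [hb]
  have : (⟨1 + (i : ℕ), by omega⟩ : Fin (n+1)) = ⟨(i : ℕ) + 1, hk⟩ := by
    simp [Fin.ext_iff, add_comm]
  rw [this]
  exact mem_boundaries_iff c ((i:ℕ)+1) (by omega) (by have := i.2; omega) hn hk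

lemma compSet_eq_image {n : ℕ} (hn : 1 ≤ n) (c : Composition n) :
    compSet c = Finset.image (fun i : Fin (n-1) => (i : ℕ) + 1) (compEquiv n c) := by
  ext k
  simp only [Finset.mem_image]
  constructor
  · intro hk
    have hk' := compSet_subset c hk
    simp only [Finset.mem_Icc] at hk'
    refine ⟨⟨k - 1, by omega⟩, ?_, by simp; omega⟩
    rw [mem_compEquiv hn]
    simpa [Nat.sub_add_cancel hk'.1] using hk
  · rintro ⟨i, hi, rfl⟩
    exact (mem_compEquiv hn c i).mp hi

lemma exists_unique_compSet {n : ℕ} (hn : 1 ≤ n) (S : Finset ℕ) (hS : S ⊆ Finset.Icc 1 (n-1)) :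
    ∃! c : Composition n, compSet c = S := by
  refine ⟨(compEquiv n).symm (Finset.univ.filter (fun i : Fin (n-1) => (i:ℕ)+1 ∈ S)), ?_, ?_⟩
  · ext k
    constructor
    · intro hk
      have hk' := compSet_subset _ hk
      simp only [Finset.mem_Icc] at hk'
      have := (mem_compEquiv hn _ ⟨k-1, by omega⟩).mpr (by simpa [Nat.sub_add_cancel hk'.1] using hk)
      rw [Equiv.apply_symm_apply] at this
      simpa [Nat.sub_add_cancel hk'.1] using this
    · intro hk
      have hk' := hS hk
      simp only [Finset.mem_Icc] at hk'
      have : (⟨k-1, by omega⟩ : Fin (n-1)) ∈ (compEquiv n) ((compEquiv n).symm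
          (Finset.univ.filter (fun i : Fin (n-1) => (i:ℕ)+1 ∈ S))) := by
        rw [Equiv.apply_symm_apply]
        simpa [Nat.sub_add_cancel hk'.1] using hk
      have := (mem_compEquiv hn _ ⟨k-1, by omega⟩).mp this
      simpa [Nat.sub_add_cancel hk'.1] using this
  · intro c hc
    apply (compEquiv n).injective
    rw [Equiv.apply_symm_apply]
    ext i
    rw [mem_compEquiv hn, hc]
    simp

def colFinset (n : ℕ) (d : ℕ →₀ ℕ) : Finset (ℕ → ℕ) :=
  ((Finset.Icc 1 n).pi (fun _ => d.support)).image
    (fun f i => if h : i ∈ Finset.Icc 1 n then f i h else 0)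

lemma mem_colFinset {n : ℕ} {d : ℕ →₀ ℕ} {κ : ℕ → ℕ}
    (h1 : Supported n κ) (h2 : colMono n κ = d) : κ ∈ colFinset n d := by
  have hval : ∀ i ∈ Finset.Icc 1 n, κ i ∈ d.support := by
    intro i hi
    rw [Finsupp.mem_support_iff, ← h2]
    intro h0
    have : ∀ v ∈ Finset.Icc 1 n, (Finsupp.single (κ v) 1 : ℕ →₀ ℕ) (κ i) = 0 := by
      rw [colMono] at h0
      have := Finsupp.finset_sum_apply (Finset.Icc 1 n) (fun v => Finsupp.single (κ v) (1:ℕ)) (κ i)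
      rw [h0] at this
      exact fun v hv => Finset.sum_eq_zero_iff.mp this.symm v hv
    have := this i hi
    simp [Finsupp.single_apply] at this
  refine Finset.mem_image.mpr ⟨fun i _ => κ i, ?_, ?_⟩
  · rw [Finset.mem_pi]; exact fun i hi => hval i hi
  · funext i
    by_cases h : i ∈ Finset.Icc 1 n
    · simp [h]
    · simp only [h, dif_neg, not_false_iff]
      have hi : i < 1 ∨ n < i := by simp only [Finset.mem_Icc, not_and_or, not_le] at h; omega
      rw [h1 i hi]

lemma finsum_if_eq {n : ℕ} {d : ℕ →₀ ℕ} (P : (ℕ → ℕ) → Prop)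
    (hP : ∀ κ, P κ → Supported n κ ∧ colMono n κ = d) (g : (ℕ → ℕ) → Polynomial ℤ) :
    (∑ᶠ κ : ℕ → ℕ, if P κ then g κ else 0) = ∑ κ ∈ colFinset n d, if P κ then g κ else 0 := by
  apply finsum_eq_finset_sum_of_support_subset
  intro κ hκ
  simp only [Function.mem_support, ne_eq] at hκ
  by_cases h : P κ
  · obtain ⟨h1, h2⟩ := hP κ h
    exact mem_colFinset h1 h2
  · simp [h] at hκ

def ascSet (n : ℕ) (κ : ℕ → ℕ) : Finset ℕ :=
  (Finset.Icc 1 (n-1)).filter fun i => κ i < κ (i+1)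

lemma ascSet_subset (n : ℕ) (κ : ℕ → ℕ) : ascSet n κ ⊆ Finset.Icc 1 (n-1) :=
  Finset.filter_subset _ _

lemma ribbonCond_iff {n : ℕ} (hn : 1 ≤ n) (c : Composition n) (κ : ℕ → ℕ) :
    RibbonCond n c κ ↔ compSet c = ascSet n κ := by
  constructor
  · intro h
    ext i
    simp only [ascSet, Finset.mem_filter]
    constructor
    · intro hi
      have hi' := compSet_subset c hi
      simp only [Finset.mem_Icc] at hi'
      exact ⟨Finset.mem_Icc.mpr hi', ((h i hi'.1 hi'.2).1 hi)⟩
    · rintro ⟨hi, hlt⟩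
      simp only [Finset.mem_Icc] at hi
      by_contra hmem
      exact absurd hlt (not_lt_of_ge ((h i hi.1 hi.2).2 hmem))
  · intro h i h1 h2
    constructor
    · intro hi
      rw [h] at hi
      exact (Finset.mem_filter.mp hi).2
    · intro hi
      rw [h] at hi
      by_contra hlt
      push_neg at hlt
      exact hi (Finset.mem_filter.mpr ⟨Finset.mem_Icc.mpr ⟨h1, h2⟩, hlt⟩)

lemma qRibbonSum_coeff {n : ℕ} (hn : 1 ≤ n) (v : ℕ → ℕ) (d : ℕ →₀ ℕ) :
    qRibbonSum n v d = ∑ κ ∈ colFinset n d,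
      if Supported n κ ∧ colMono n κ = d
      then (Polynomial.X : Polynomial ℤ) ^ wt v (ascSet n κ) else 0 := by
  have happ : qRibbonSum n v d = ∑ α : Composition n,
      (Polynomial.X : Polynomial ℤ) ^ wt v (compSet α) * ribbon α d := by
    rw [qRibbonSum]
    exact Finset.sum_apply d _ _
  rw [happ]
  have hrib : ∀ α : Composition n, ribbon α d = ∑ κ ∈ colFinset n d,
      if Supported n κ ∧ colMono n κ = d ∧ RibbonCond n α κ then (1 : Polynomial ℤ) else 0 := by
    intro α
    show (∑ᶠ κ : ℕ → ℕ, if Supported n κ ∧ colMono n κ = d ∧ RibbonCond n α κ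
        then (1 : Polynomial ℤ) else 0) = _
    apply finsum_eq_finset_sum_of_support_subset
    intro κ hκ
    simp only [Function.mem_support, ne_eq] at hκ
    by_cases h : Supported n κ ∧ colMono n κ = d ∧ RibbonCond n α κ
    · exact mem_colFinset h.1 h.2.1
    · rw [if_neg h] at hκ; simp at hκ
  simp only [hrib, Finset.mul_sum, mul_ite, mul_one, mul_zero]
  rw [Finset.sum_comm]
  apply Finset.sum_congr rfl
  intro κ _
  by_cases h : Supported n κ ∧ colMono n κ = d
  · rw [if_pos h]
    obtain ⟨α₀, hα₀, huniq⟩ := exists_unique_compSet hn (ascSet n κ) (ascSet_subset n κ)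
    rw [Finset.sum_eq_single α₀]
    · rw [if_pos ⟨h.1, h.2, (ribbonCond_iff hn α₀ κ).mpr hα₀⟩, hα₀]
    · intro α _ hne
      rw [if_neg]
      rintro ⟨-, -, hr⟩
      exact hne (huniq α ((ribbonCond_iff hn α κ).mp hr))
    · intro habs
      exact absurd (Finset.mem_univ α₀) habs
  · rw [if_neg h]
    apply Finset.sum_eq_zero
    intro α _
    rw [if_neg]
    rintro ⟨h1, h2, -⟩
    exact h ⟨h1, h2⟩


def joinCol (n : ℕ) (κ1 κ2 : ℕ → ℕ) : ℕ → ℕ := fun i => if i ≤ n then κ1 i else κ2 (i - n)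

def res1 (n : ℕ) (κ : ℕ → ℕ) : ℕ → ℕ := fun i => if i ≤ n then κ i else 0

def res2 (n : ℕ) (κ : ℕ → ℕ) : ℕ → ℕ := fun j => if j = 0 then 0 else κ (j + n)

lemma joinCol_supported {n m : ℕ} {κ1 κ2 : ℕ → ℕ} (h1 : Supported n κ1) (h2 : Supported m κ2) :
    Supported (n + m) (joinCol n κ1 κ2) := by
  intro i hi
  rcases hi with hi | hi
  · have : i ≤ n := by omega
    simp only [joinCol, if_pos this]
    exact h1 i (Or.inl hi)
  · by_cases h : i ≤ n
    · simp only [joinCol, if_pos h]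
      exact h1 i (Or.inr (by omega))
    · simp only [joinCol, if_neg h]
      exact h2 _ (Or.inr (by omega))

lemma res1_supported {n m : ℕ} {κ : ℕ → ℕ} (h : Supported (n + m) κ) :
    Supported n (res1 n κ) := by
  intro i hi
  rcases hi with hi | hi
  · simp only [res1, if_pos (by omega : i ≤ n)]
    exact h i (Or.inl hi)
  · simp only [res1, if_neg (by omega : ¬ i ≤ n)]

lemma res2_supported {n m : ℕ} {κ : ℕ → ℕ} (h : Supported (n + m) κ) :
    Supported m (res2 n κ) := by
  intro j hj
  rcases hj with hj | hj
  · simp only [res2, if_pos (by omega : j = 0)]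
  · by_cases h0 : j = 0
    · simp [res2, h0]
    · simp only [res2, if_neg h0]
      exact h _ (Or.inr (by omega))

lemma joinCol_res {n m : ℕ} {κ : ℕ → ℕ} (h : Supported (n + m) κ) :
    joinCol n (res1 n κ) (res2 n κ) = κ := by
  funext i
  by_cases hi : i ≤ n
  · simp [joinCol, res1, hi]
  · simp only [joinCol, if_neg hi, res2, if_neg (by omega : ¬ i - n = 0)]
    congr 1
    omega

lemma res1_joinCol {n : ℕ} {κ1 κ2 : ℕ → ℕ} (h1 : Supported n κ1) :
    res1 n (joinCol n κ1 κ2) = κ1 := by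
  funext i
  by_cases hi : i ≤ n
  · simp [res1, joinCol, hi]
  · simp only [res1, if_neg hi]
    exact (h1 i (Or.inr (by omega))).symm

lemma res2_joinCol {n m : ℕ} {κ1 κ2 : ℕ → ℕ} (h2 : Supported m κ2) :
    res2 n (joinCol n κ1 κ2) = κ2 := by
  funext j
  by_cases hj : j = 0
  · subst hj
    simp only [res2, if_pos rfl]
    exact (h2 0 (Or.inl zero_lt_one)).symm
  · simp only [res2, if_neg hj, joinCol, if_neg (by omega : ¬ j + n ≤ n)]
    congr 1
    omega

lemma Icc_one_eq_Ioc (k : ℕ) : Finset.Icc 1 k = Finset.Ioc 0 k := by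
  ext x
  simp [Finset.mem_Icc, Finset.mem_Ioc]
  omega

lemma colMono_joinCol (n m : ℕ) (κ1 κ2 : ℕ → ℕ) :
    colMono (n + m) (joinCol n κ1 κ2) = colMono n κ1 + colMono m κ2 := by
  rw [colMono, colMono, colMono, Icc_one_eq_Ioc, Icc_one_eq_Ioc, Icc_one_eq_Ioc,
    ← Finset.sum_Ioc_consecutive _ (Nat.zero_le n) (Nat.le_add_right n m)]
  congr 1
  · apply Finset.sum_congr rfl
    intro x hx
    rw [Finset.mem_Ioc] at hx
    simp [joinCol, hx.2]
  · apply Finset.sum_nbij' (i := fun x => x - n) (j := fun x => x + n)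
    · intro a ha; rw [Finset.mem_Ioc] at ha ⊢; omega
    · intro a ha; rw [Finset.mem_Ioc] at ha ⊢; omega
    · intro a ha; rw [Finset.mem_Ioc] at ha; omega
    · intro a ha; rw [Finset.mem_Ioc] at ha; omega
    · intro a ha
      rw [Finset.mem_Ioc] at ha
      have hna : ¬ a ≤ n := by omega
      simp only [joinCol, if_neg hna]

lemma wt_ascSet_eq (N : ℕ) (u : ℕ → ℕ) (κ : ℕ → ℕ) :
    wt u (ascSet N κ) = ∑ i ∈ Finset.Ioc 0 (N - 1), if κ i < κ (i + 1) then u i else 0 := by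
  rw [wt, ascSet, Finset.sum_filter, Icc_one_eq_Ioc]

lemma wt_ascSet_joinCol {n m : ℕ} (hn : 1 ≤ n) (hm : 1 ≤ m) (v w u : ℕ → ℕ)
    (hu : ∀ i, u i = if i < n then v i else if i = n then 0 else w (i - n)) (κ1 κ2 : ℕ → ℕ) :
    wt u (ascSet (n + m) (joinCol n κ1 κ2)) = wt v (ascSet n κ1) + wt w (ascSet m κ2) := by
  rw [wt_ascSet_eq, wt_ascSet_eq, wt_ascSet_eq,
    ← Finset.sum_Ioc_consecutive _ (Nat.zero_le n) (by omega : n ≤ n + m - 1),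
    ← Finset.sum_Ioc_consecutive _ (by omega : 0 ≤ n - 1) (by omega : n - 1 ≤ n)]
  have e1 : (∑ i ∈ Finset.Ioc 0 (n - 1),
      if joinCol n κ1 κ2 i < joinCol n κ1 κ2 (i + 1) then u i else 0)
      = ∑ i ∈ Finset.Ioc 0 (n - 1), if κ1 i < κ1 (i + 1) then v i else 0 := by
    apply Finset.sum_congr rfl
    intro i hi
    rw [Finset.mem_Ioc] at hi
    rw [hu i]
    simp only [joinCol, if_pos (by omega : i ≤ n), if_pos (by omega : i + 1 ≤ n),
      if_pos (by omega : i < n)]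
  have e2 : (∑ i ∈ Finset.Ioc (n - 1) n,
      if joinCol n κ1 κ2 i < joinCol n κ1 κ2 (i + 1) then u i else 0) = 0 := by
    apply Finset.sum_eq_zero
    intro i hi
    rw [Finset.mem_Ioc] at hi
    have h0 : u i = 0 := by
      rw [hu i]
      simp only [if_neg (by omega : ¬ i < n), if_pos (by omega : i = n)]
    rw [h0]
    simp
  have e3 : (∑ i ∈ Finset.Ioc n (n + m - 1),
      if joinCol n κ1 κ2 i < joinCol n κ1 κ2 (i + 1) then u i else 0)
      = ∑ j ∈ Finset.Ioc 0 (m - 1), if κ2 j < κ2 (j + 1) then w j else 0 := by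
    apply Finset.sum_nbij' (i := fun x => x - n) (j := fun x => x + n)
    · intro a ha; rw [Finset.mem_Ioc] at ha ⊢; omega
    · intro a ha; rw [Finset.mem_Ioc] at ha ⊢; omega
    · intro a ha; rw [Finset.mem_Ioc] at ha; omega
    · intro a ha; rw [Finset.mem_Ioc] at ha; omega
    · intro a ha
      rw [Finset.mem_Ioc] at ha
      rw [hu a]
      simp only [joinCol, if_neg (by omega : ¬ a ≤ n), if_neg (by omega : ¬ a + 1 ≤ n),
        if_neg (by omega : ¬ a < n), if_neg (by omega : ¬ a = n)]
      rw [(by omega : a + 1 - n = a - n + 1)]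
  rw [e1, e2, e3, add_zero]

/-- Lemma `lemma:union`. For lists `v = (v_1, …, v_{n-1})` and
`w = (w_1, …, w_{m-1})` of nonnegative integers,
`(Σ_{β ⊨ n} q^{v(set β)} r_β) (Σ_{γ ⊨ m} q^{w(set γ)} r_γ) = Σ_{α ⊨ n+m} q^{(v,0,w)(set α)} r_α`,
where `(v,0,w)` is the concatenated list of length `n+m-1`. -/
theorem qRibbonSum_mul (n m : ℕ) (hn : 1 ≤ n) (hm : 1 ≤ m) (v w u : ℕ → ℕ)
    (hu : ∀ i, u i = if i < n then v i else if i = n then 0 else w (i - n)) :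
    qRibbonSum n v * qRibbonSum m w = qRibbonSum (n + m) u := by
  funext d
  have hmul : (qRibbonSum n v * qRibbonSum m w) d
      = ∑ p ∈ Finset.HasAntidiagonal.antidiagonal d, qRibbonSum n v p.1 * qRibbonSum m w p.2 :=
    MvPowerSeries.coeff_mul d _ _
  rw [hmul, qRibbonSum_coeff (show 1 ≤ n + m by omega) u d]
  have hterm : ∀ p ∈ Finset.HasAntidiagonal.antidiagonal d, qRibbonSum n v p.1 * qRibbonSum m w p.2
      = ∑ x ∈ colFinset n p.1 ×ˢ colFinset m p.2,
          if (Supported n x.1 ∧ colMono n x.1 = p.1) ∧ (Supported m x.2 ∧ colMono m x.2 = p.2)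
          then (Polynomial.X : Polynomial ℤ) ^ (wt v (ascSet n x.1) + wt w (ascSet m x.2))
          else 0 := by
    intro p _
    rw [qRibbonSum_coeff hn, qRibbonSum_coeff hm, Finset.sum_mul_sum, ← Finset.sum_product']
    apply Finset.sum_congr rfl
    intro x _
    by_cases h1 : Supported n x.1 ∧ colMono n x.1 = p.1
    · by_cases h2 : Supported m x.2 ∧ colMono m x.2 = p.2
      · rw [if_pos h1, if_pos h2, if_pos ⟨h1, h2⟩, pow_add]
      · rw [if_pos h1, if_neg h2, mul_zero, if_neg]
        rintro ⟨-, h⟩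
        exact h2 h
    · rw [if_neg h1, zero_mul, if_neg]
      rintro ⟨h, -⟩
      exact h1 h
  rw [Finset.sum_congr rfl hterm, Finset.sum_sigma']
  rw [← Finset.sum_filter (s := (Finset.HasAntidiagonal.antidiagonal d).sigma
        fun p => colFinset n p.1 ×ˢ colFinset m p.2)
      (p := fun y => (Supported n y.2.1 ∧ colMono n y.2.1 = y.1.1) ∧
        (Supported m y.2.2 ∧ colMono m y.2.2 = y.1.2))]
  rw [← Finset.sum_filter (s := colFinset (n + m) d)
      (p := fun κ => Supported (n + m) κ ∧ colMono (n + m) κ = d)]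
  apply Finset.sum_nbij' (i := fun y => joinCol n y.2.1 y.2.2)
    (j := fun κ => ⟨(colMono n (res1 n κ), colMono m (res2 n κ)), (res1 n κ, res2 n κ)⟩)
  · rintro ⟨p, κ1, κ2⟩ hy
    rw [Finset.mem_filter, Finset.mem_sigma] at hy
    obtain ⟨⟨hp, -⟩, ⟨hs1, hc1⟩, hs2, hc2⟩ := hy
    rw [Finset.HasAntidiagonal.mem_antidiagonal] at hp
    have hsup := joinCol_supported hs1 hs2
    have hcol : colMono (n + m) (joinCol n κ1 κ2) = d := by
      rw [colMono_joinCol, hc1, hc2, hp]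
    rw [Finset.mem_filter]
    exact ⟨mem_colFinset hsup hcol, hsup, hcol⟩
  · intro κ hκ
    rw [Finset.mem_filter] at hκ
    obtain ⟨-, hsup, hcol⟩ := hκ
    have hs1 := res1_supported hsup
    have hs2 := res2_supported hsup
    have hadd : colMono n (res1 n κ) + colMono m (res2 n κ) = d := by
      rw [← colMono_joinCol, joinCol_res hsup, hcol]
    rw [Finset.mem_filter, Finset.mem_sigma, Finset.HasAntidiagonal.mem_antidiagonal]
    refine ⟨⟨hadd, ?_⟩, ⟨hs1, rfl⟩, hs2, rfl⟩
    rw [Finset.mem_product]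
    exact ⟨mem_colFinset hs1 rfl, mem_colFinset hs2 rfl⟩
  · rintro ⟨p, κ1, κ2⟩ hy
    rw [Finset.mem_filter, Finset.mem_sigma] at hy
    obtain ⟨⟨-, -⟩, ⟨hs1, hc1⟩, hs2, hc2⟩ := hy
    have e1 : res1 n (joinCol n κ1 κ2) = κ1 := res1_joinCol hs1
    have e2 : res2 n (joinCol n κ1 κ2) = κ2 := res2_joinCol hs2
    simp only [e1, e2, hc1, hc2]
  · intro κ hκ
    rw [Finset.mem_filter] at hκ
    exact joinCol_res hκ.2.1
  · rintro ⟨p, κ1, κ2⟩ hy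
    exact congrArg (fun k => (Polynomial.X : Polynomial ℤ) ^ k)
      (wt_ascSet_joinCol hn hm v w u hu κ1 κ2).symm
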